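/- Let X_1, …, X_n be independent nonnegative discrete random variables, where X_i has pmf f_i on a finite set S. Let A be any random selection procedure that selects at most one index from {1,…,n} (possibly none), and set p_{ix} = Pr[A selects i | X_i = x]. Then ∑_{i=1}^n ∑_{x∈S} f_i(x)·p_{ix} ≤ 1, and consequently E[value of selected candidate] = ∑_{i=1}^n ∑_{x∈S} x·f_i(x)·p_{ix} is at most the optimum of the LP: max ∑_{i,x} x·f_i(x)·p_{ix} subject to ∑_{i,x} f_i(x)·p_{ix} ≤ 1, p_{ix} ∈ [0,1]. In particular E[max_i X_i] is at most this LP optimum. -/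

import Mathlib

open Finset MeasureTheory ProbabilityTheory

/-- `f·p = μ(s∩t)` and `p ≤ 1` for conditional probabilities. -/
lemma fp_aux {Ω : Type*} [MeasurableSpace Ω] (μ : Measure Ω)
    [IsProbabilityMeasure μ] (s t : Set Ω) (hs : MeasurableSet s) :
    (μ s).toReal * (ProbabilityTheory.cond μ s t).toReal = (μ (s ∩ t)).toReal ∧
    (ProbabilityTheory.cond μ s t).toReal ≤ 1 := by
  rw [ProbabilityTheory.cond_apply hs]
  by_cases h0 : μ s = 0
  · have h1 : μ (s ∩ t) = 0 := measure_mono_null Set.inter_subset_left h0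
    simp [h0, h1]
  · have hfin : μ s ≠ ⊤ := measure_ne_top μ s
    have hifin : (μ s)⁻¹ ≠ ⊤ := ENNReal.inv_ne_top.2 h0
    constructor
    · rw [ENNReal.toReal_mul, ← mul_assoc, ← ENNReal.toReal_mul,
        ENNReal.mul_inv_cancel h0 hfin]
      simp
    · have : (μ s)⁻¹ * μ (s ∩ t) ≤ (μ s)⁻¹ * μ s :=
        mul_le_mul_right (measure_mono Set.inter_subset_left) _
      rw [ENNReal.inv_mul_cancel h0 hfin] at this
      calc ((μ s)⁻¹ * μ (s ∩ t)).toReal ≤ (1 : ENNReal).toReal :=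
            ENNReal.toReal_mono (by simp) this
        _ = 1 := by simp

lemma main_aux {Ω : Type*} [MeasurableSpace Ω] (μ : Measure Ω)
    [IsProbabilityMeasure μ]
    (n : ℕ) (S : Finset ℝ)
    (X : Fin n → Ω → ℝ) (hmX : ∀ i, Measurable (X i))
    (hsupp : ∀ᵐ ω ∂μ, ∀ i, X i ω ∈ S)
    (H : Fin n → Set Ω) (hmH : ∀ i, MeasurableSet (H i))
    (hdisj : ∀ i j, i ≠ j → Disjoint (H i) (H j)) :
    (∑ i : Fin n, ∑ x ∈ S, (μ ({ω | X i ω = x} ∩ H i)).toReal ≤ 1) ∧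
    (∫ ω, ∑ i : Fin n, Set.indicator (H i) (X i) ω ∂μ =
      ∑ i : Fin n, ∑ x ∈ S, x * (μ ({ω | X i ω = x} ∩ H i)).toReal) := by
  have hmeq : ∀ (i : Fin n) (x : ℝ), MeasurableSet {ω | X i ω = x} :=
    fun i x => hmX i (measurableSet_singleton x)
  have hm : ∀ (i : Fin n) (x : ℝ), MeasurableSet ({ω | X i ω = x} ∩ H i) :=
    fun i x => (hmeq i x).inter (hmH i)
  constructor
  · -- feasibility
    have h1 : ∀ i : Fin n, ∑ x ∈ S, (μ ({ω | X i ω = x} ∩ H i)).toReal ≤ (μ (H i)).toReal := by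
      intro i
      have hpd : (↑S : Set ℝ).PairwiseDisjoint (fun x => {ω | X i ω = x} ∩ H i) := by
        intro x _ y _ hxy
        refine Set.disjoint_left.2 fun ω hω1 hω2 => hxy ?_
        exact hω1.1.symm.trans hω2.1
      rw [← ENNReal.toReal_sum (fun x _ => measure_ne_top μ _),
        ← measure_biUnion_finset hpd (fun x _ => hm i x)]
      apply ENNReal.toReal_mono (measure_ne_top μ _)
      apply measure_mono
      intro ω hω
      simp only [Set.mem_iUnion] at hω
      obtain ⟨x, _, h⟩ := hω
      exact h.2
    calc ∑ i : Fin n, ∑ x ∈ S, (μ ({ω | X i ω = x} ∩ H i)).toReal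
        ≤ ∑ i : Fin n, (μ (H i)).toReal := Finset.sum_le_sum (fun i _ => h1 i)
      _ = (∑ i : Fin n, μ (H i)).toReal :=
          (ENNReal.toReal_sum (fun i _ => measure_ne_top μ _)).symm
      _ ≤ (1 : ENNReal).toReal := by
          apply ENNReal.toReal_mono (by simp)
          have hpd' : (↑(Finset.univ : Finset (Fin n)) : Set (Fin n)).PairwiseDisjoint H :=
            fun i _ j _ hij => hdisj i j hij
          rw [← measure_biUnion_finset hpd' (fun i _ => hmH i)]
          exact prob_le_one
      _ = 1 := by simp
  · -- objective value
    have key : ∀ i : Fin n,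
        (fun ω => Set.indicator (H i) (X i) ω) =ᵐ[μ]
        (fun ω => ∑ x ∈ S, Set.indicator ({ω' | X i ω' = x} ∩ H i) (fun _ => x) ω) := by
      intro i
      filter_upwards [hsupp] with ω hω
      by_cases hωH : ω ∈ H i
      · have hterm : ∀ x ∈ S, Set.indicator ({ω' | X i ω' = x} ∩ H i) (fun _ => x) ω
            = if X i ω = x then x else 0 := by
          intro x _
          by_cases hx : X i ω = x
          · rw [if_pos hx, Set.indicator_of_mem (show ω ∈ {ω' | X i ω' = x} ∩ H i from ⟨hx, hωH⟩)]
          · rw [if_neg hx, Set.indicator_of_notMem (fun h => hx h.1)]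
        rw [Set.indicator_of_mem hωH, Finset.sum_congr rfl hterm,
          Finset.sum_ite_eq S (X i ω) (fun y => y), if_pos (hω i)]
      · rw [Set.indicator_of_notMem hωH]
        symm
        refine Finset.sum_eq_zero fun x _ => ?_
        exact Set.indicator_of_notMem (fun h => hωH h.2) _
    have hint : ∀ i : Fin n, Integrable
        (fun ω => ∑ x ∈ S, Set.indicator ({ω' | X i ω' = x} ∩ H i) (fun _ => x) ω) μ :=
      fun i => integrable_finset_sum _ (fun x _ => (integrable_const x).indicator (hm i x))
    have hint2 : ∀ i : Fin n, Integrable (fun ω => Set.indicator (H i) (X i) ω) μ :=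
      fun i => (hint i).congr (key i).symm
    rw [integral_finset_sum _ (fun i _ => hint2 i)]
    refine Finset.sum_congr rfl (fun i _ => ?_)
    rw [integral_congr_ae (key i), integral_finset_sum _ (fun x _ =>
      (integrable_const x).indicator (hm i x))]
    refine Finset.sum_congr rfl (fun x _ => ?_)
    rw [integral_indicator_const x (hm i x)]
    simp [mul_comm, Measure.real]

/-- Offline Relaxation Lemma: the conditional selection probabilities of any
procedure selecting at most one candidate are feasible for the offline
relaxation LP, the expected selected value equals the LP objective at those
probabilities, and both it and `E[max_i X_i]` are bounded by the LP optimum. -/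
theorem stmt_4 {Ω : Type*} [MeasurableSpace Ω] (μ : Measure Ω)
    [IsProbabilityMeasure μ]
    (n : ℕ) (hn : 0 < n) (S : Finset ℝ) (hS : ∀ x ∈ S, 0 ≤ x)
    (X : Fin n → Ω → ℝ) (hmX : ∀ i, Measurable (X i))
    (hsupp : ∀ᵐ ω ∂μ, ∀ i, X i ω ∈ S)
    (hindep : iIndepFun X μ)
    (H : Fin n → Set Ω) (hmH : ∀ i, MeasurableSet (H i))
    (hdisj : ∀ i j, i ≠ j → Disjoint (H i) (H j))
    (f p : Fin n → ℝ → ℝ)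
    (hf : ∀ i x, f i x = (μ {ω | X i ω = x}).toReal)
    (hp : ∀ i x, p i x = (ProbabilityTheory.cond μ {ω | X i ω = x} (H i)).toReal) :
    (∑ i : Fin n, ∑ x ∈ S, f i x * p i x ≤ 1) ∧
    (∫ ω, ∑ i : Fin n, Set.indicator (H i) (X i) ω ∂μ =
      ∑ i : Fin n, ∑ x ∈ S, x * f i x * p i x) ∧
    (∀ C : ℝ,
      (∀ q : Fin n → ℝ → ℝ,
        (∀ i, ∀ x ∈ S, 0 ≤ q i x ∧ q i x ≤ 1) →
        (∑ i : Fin n, ∑ x ∈ S, f i x * q i x ≤ 1) →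
        ∑ i : Fin n, ∑ x ∈ S, x * f i x * q i x ≤ C) →
      (∫ ω, ∑ i : Fin n, Set.indicator (H i) (X i) ω ∂μ ≤ C) ∧
      (∫ ω, (⨆ i, X i ω) ∂μ ≤ C)) := by
  classical
  have hne : Nonempty (Fin n) := Fin.pos_iff_nonempty.mp hn
  have hmeq : ∀ (i : Fin n) (x : ℝ), MeasurableSet {ω | X i ω = x} :=
    fun i x => hmX i (measurableSet_singleton x)
  have hfp : ∀ i x, f i x * p i x = (μ ({ω | X i ω = x} ∩ H i)).toReal := by
    intro i x
    rw [hf, hp]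
    exact (fp_aux μ _ _ (hmeq i x)).1
  obtain ⟨hfeas, hobj⟩ := main_aux μ n S X hmX hsupp H hmH hdisj
  have hfeasP : ∑ i : Fin n, ∑ x ∈ S, f i x * p i x ≤ 1 := by
    calc ∑ i : Fin n, ∑ x ∈ S, f i x * p i x
        = ∑ i : Fin n, ∑ x ∈ S, (μ ({ω | X i ω = x} ∩ H i)).toReal :=
          Finset.sum_congr rfl fun i _ => Finset.sum_congr rfl fun x _ => hfp i x
      _ ≤ 1 := hfeas
  have hobjP : ∫ ω, ∑ i : Fin n, Set.indicator (H i) (X i) ω ∂μ =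
      ∑ i : Fin n, ∑ x ∈ S, x * f i x * p i x := by
    rw [hobj]
    exact Finset.sum_congr rfl fun i _ => Finset.sum_congr rfl fun x _ => by
      rw [mul_assoc, hfp i x]
  refine ⟨hfeasP, hobjP, ?_⟩
  intro C hC
  have hpbound : ∀ i, ∀ x ∈ S, 0 ≤ p i x ∧ p i x ≤ 1 := by
    intro i x _
    rw [hp]
    exact ⟨ENNReal.toReal_nonneg, (fp_aux μ _ _ (hmeq i x)).2⟩
  constructor
  · rw [hobjP]
    exact hC p hpbound hfeasP
  · -- sup part: construct the argmax partition
    set H' : Fin n → Set Ω :=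
      fun i => {ω | (∀ j, X j ω ≤ X i ω) ∧ ∀ j, j < i → X j ω < X i ω} with hH'def
    have hmemH' : ∀ (i : Fin n) (ω : Ω),
        ω ∈ H' i ↔ ((∀ j, X j ω ≤ X i ω) ∧ ∀ j, j < i → X j ω < X i ω) :=
      fun i ω => Iff.rfl
    have hmH' : ∀ i, MeasurableSet (H' i) := by
      intro i
      have h1 : MeasurableSet {ω | ∀ j, X j ω ≤ X i ω} := by
        rw [Set.setOf_forall]
        exact MeasurableSet.iInter fun j => measurableSet_le (hmX j) (hmX i)
      have h2 : MeasurableSet {ω | ∀ j, j < i → X j ω < X i ω} := by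
        rw [Set.setOf_forall]
        refine MeasurableSet.iInter fun j => ?_
        by_cases hj : j < i
        · simp only [hj, true_implies]
          exact measurableSet_lt (hmX j) (hmX i)
        · simp only [hj, false_implies]
          exact MeasurableSet.univ
      exact h1.inter h2
    have hdisj' : ∀ i j, i ≠ j → Disjoint (H' i) (H' j) := by
      intro i j hij
      refine Set.disjoint_left.2 fun ω h1 h2 => ?_
      rcases lt_or_gt_of_ne hij with h | h
      · exact absurd (h1.1 j) (not_le.2 (h2.2 i h))
      · exact absurd (h2.1 i) (not_le.2 (h1.2 j h))
    have hsup : ∀ ω, (⨆ i, X i ω) = ∑ i : Fin n, Set.indicator (H' i) (X i) ω := by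
      intro ω
      obtain ⟨im, him⟩ := Finite.exists_max (fun i => X i ω)
      set T : Finset (Fin n) := Finset.univ.filter (fun i => ∀ j, X j ω ≤ X i ω) with hT
      have hTne : T.Nonempty := ⟨im, by simp [hT, him]⟩
      set i0 := T.min' hTne with hi0def
      have hi0 : ∀ j, X j ω ≤ X i0 ω :=
        (Finset.mem_filter.1 (T.min'_mem hTne)).2
      have hω0 : ω ∈ H' i0 := by
        refine (hmemH' i0 ω).2 ⟨hi0, fun j hj => ?_⟩
        have hjT : j ∉ T := fun hjT => absurd (T.min'_le j hjT) (not_le.2 hj)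
        have hnot : ¬ ∀ k, X k ω ≤ X j ω := by
          intro hall
          exact hjT (by simp [hT, hall])
        push_neg at hnot
        obtain ⟨k, hk⟩ := hnot
        exact lt_of_lt_of_le hk (hi0 k)
      have hsupeq : (⨆ i, X i ω) = X i0 ω :=
        le_antisymm (ciSup_le hi0)
          (le_ciSup (f := fun i => X i ω)
            (Set.Finite.bddAbove (Set.finite_range _)) i0)
      rw [hsupeq, Finset.sum_eq_single i0]
      · exact (Set.indicator_of_mem hω0 _).symm
      · intro j _ hji
        exact Set.indicator_of_notMem
          (fun hj => Set.disjoint_left.1 (hdisj' j i0 hji) hj hω0) _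
      · intro h
        exact absurd (Finset.mem_univ i0) h
    obtain ⟨hfeas', hobj'⟩ := main_aux μ n S X hmX hsupp H' hmH' hdisj'
    set q : Fin n → ℝ → ℝ :=
      fun i x => (ProbabilityTheory.cond μ {ω | X i ω = x} (H' i)).toReal with hqdef
    have hfq : ∀ i x, f i x * q i x = (μ ({ω | X i ω = x} ∩ H' i)).toReal := by
      intro i x
      rw [hf, hqdef]
      exact (fp_aux μ _ _ (hmeq i x)).1
    have hqbound : ∀ i, ∀ x ∈ S, 0 ≤ q i x ∧ q i x ≤ 1 := by
      intro i x _
      rw [hqdef]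
      exact ⟨ENNReal.toReal_nonneg, (fp_aux μ _ _ (hmeq i x)).2⟩
    have hfeasq : ∑ i : Fin n, ∑ x ∈ S, f i x * q i x ≤ 1 := by
      calc ∑ i : Fin n, ∑ x ∈ S, f i x * q i x
          = ∑ i : Fin n, ∑ x ∈ S, (μ ({ω | X i ω = x} ∩ H' i)).toReal :=
            Finset.sum_congr rfl fun i _ => Finset.sum_congr rfl fun x _ => hfq i x
        _ ≤ 1 := hfeas'
    calc ∫ ω, (⨆ i, X i ω) ∂μ
        = ∫ ω, ∑ i : Fin n, Set.indicator (H' i) (X i) ω ∂μ :=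
          integral_congr_ae (Filter.Eventually.of_forall fun ω => hsup ω)
      _ = ∑ i : Fin n, ∑ x ∈ S, x * (μ ({ω | X i ω = x} ∩ H' i)).toReal := hobj'
      _ = ∑ i : Fin n, ∑ x ∈ S, x * f i x * q i x :=
          Finset.sum_congr rfl fun i _ => Finset.sum_congr rfl fun x _ => by
            rw [mul_assoc, hfq i x]
      _ ≤ C := hC q hqbound hfeasq
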